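/- Let (M₁, M₂) and (N₁, N₂) be two-outcome POVMs on ℂ^d and let D ≥ 1. For any density matrix ρ on ℂ^d ⊗ ℂ^D, define for μ ∈ {1,2} the D×D matrix T_μ = Tr_S[((M_μ − N_μ) ⊗ I_D) ρ], with entries (T_μ)_{ab} = Σ_{i,j} (M_μ − N_μ)_{ji} ρ_{(i,a),(j,b)}. Then ‖T₁‖_* + ‖T₂‖_* ≤ 2·max_k |λ_k(M₁ − N₁)|, where λ_k(M₁ − N₁) are the (real) eigenvalues of the Hermitian matrix M₁ − N₁. -/

import Mathlib

open Matrix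
open scoped ComplexOrder

/-- The trace norm (nuclear norm) of a complex matrix: the trace of `√(Mᴴ M)`,
which equals the sum of the singular values of `M`. -/
noncomputable def traceNorm {n : Type*} [Fintype n] [DecidableEq n]
    (M : Matrix n n ℂ) : ℝ :=
  (((Matrix.posSemidef_conjTranspose_mul_self M).1.eigenvectorUnitary.1 *
    diagonal (((↑) : ℝ → ℂ) ∘ Real.sqrt ∘ (Matrix.posSemidef_conjTranspose_mul_self M).1.eigenvalues) *
    (star (Matrix.posSemidef_conjTranspose_mul_self M).1.eigenvectorUnitary : Matrix n n ℂ)).trace).re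

/-- `partialTraceS X ρ = Tr_S[(X ⊗ I) ρ]`: the `D × D` matrix with entries
`(T)_{ab} = ∑ i j, X_{ji} ρ_{(i,a),(j,b)}`, the partial trace over the system factor. -/
noncomputable def partialTraceS {d D : ℕ} (X : Matrix (Fin d) (Fin d) ℂ)
    (ρ : Matrix (Fin d × Fin D) (Fin d × Fin D) ℂ) : Matrix (Fin D) (Fin D) ℂ :=
  Matrix.of fun a b => ∑ i, ∑ j, X j i * ρ (i, a) (j, b)


lemma sqrt_congr' {n : Type*} [Fintype n] [DecidableEq n] {A B : Matrix n n ℂ}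
    (hA : A.PosSemidef) (hB : B.PosSemidef) (h : A = B) :
    hA.1.eigenvectorUnitary.1 * diagonal (((↑) : ℝ → ℂ) ∘ Real.sqrt ∘ hA.1.eigenvalues) *
      (star hA.1.eigenvectorUnitary : Matrix n n ℂ) =
    hB.1.eigenvectorUnitary.1 * diagonal (((↑) : ℝ → ℂ) ∘ Real.sqrt ∘ hB.1.eigenvalues) *
      (star hB.1.eigenvectorUnitary : Matrix n n ℂ) := by
  subst h; rfl

lemma psd_trace_nonneg' {n : Type*} [Fintype n] [DecidableEq n] {M : Matrix n n ℂ}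
    (hM : M.PosSemidef) : 0 ≤ M.trace := by
  have h : ∀ i, 0 ≤ M i i := fun i => by
    simpa [dotProduct, Matrix.mulVec, Pi.single_apply, Finset.sum_ite_eq] using hM.dotProduct_mulVec_nonneg (Pi.single i 1)
  exact Finset.sum_nonneg fun i _ => h i

open scoped MatrixOrder Matrix.Norms.L2Operator in
lemma psd_trace_mul_nonneg' {n : Type*} [Fintype n] [DecidableEq n] {P Q : Matrix n n ℂ}
    (hP : P.PosSemidef) (hQ : Q.PosSemidef) : 0 ≤ (P * Q).trace := by
  obtain ⟨B, rfl⟩ := CStarAlgebra.nonneg_iff_eq_star_mul_self.mp hP.nonneg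
  change 0 ≤ (Bᴴ * B * Q).trace
  have h1 : (Bᴴ * B * Q).trace = (B * Q * Bᴴ).trace := by
    rw [trace_mul_comm (B * Q) Bᴴ, ← mul_assoc]
  rw [h1]
  exact psd_trace_nonneg' (hQ.mul_mul_conjTranspose_same B)



lemma traceNorm_neg' {n : Type*} [Fintype n] [DecidableEq n] (M : Matrix n n ℂ) :
    traceNorm (-M) = traceNorm M := by
  unfold traceNorm
  rw [sqrt_congr' (posSemidef_conjTranspose_mul_self (-M)) (posSemidef_conjTranspose_mul_self M)
    (by rw [conjTranspose_neg, neg_mul_neg])]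

open scoped MatrixOrder Matrix.Norms.L2Operator in
lemma traceNorm_hermitian {n : Type*} [Fintype n] [DecidableEq n] {T : Matrix n n ℂ}
    (hT : T.IsHermitian) : traceNorm T = ∑ k, |hT.eigenvalues k| := by
  set U : Matrix n n ℂ := (hT.eigenvectorUnitary : Matrix n n ℂ)
  have hU1 : U * star U = 1 := mem_unitaryGroup_iff.mp hT.eigenvectorUnitary.2
  have hU2 : star U * U = 1 := mem_unitaryGroup_iff'.mp hT.eigenvectorUnitary.2
  set S : Matrix n n ℂ := U * diagonal (fun k => ((|hT.eigenvalues k| : ℝ) : ℂ)) * star U with hSdef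
  have hSpsd : S.PosSemidef := by
    rw [hSdef]
    have : star U = Uᴴ := rfl
    rw [this]
    exact PosSemidef.mul_mul_conjTranspose_same
      (posSemidef_diagonal_iff.mpr fun k => Complex.zero_le_real.mpr (abs_nonneg _)) U
  have key : ∀ f g : n → ℂ, (U * diagonal f * star U) * (U * diagonal g * star U)
      = U * diagonal (fun k => f k * g k) * star U := by
    intro f g
    simp only [mul_assoc]
    rw [← mul_assoc (star U) U, hU2, one_mul, ← mul_assoc (diagonal f), diagonal_mul_diagonal]
  have hsq : S ^ 2 = Tᴴ * T := by
    rw [hT, pow_two, hSdef, key]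
    conv_rhs => rw [hT.spectral_theorem]
    simp only [Unitary.conjStarAlgAut_apply, Unitary.coe_star]
    rw [key]
    have hfun : (fun k => ((|hT.eigenvalues k| : ℝ) : ℂ) * ((|hT.eigenvalues k| : ℝ) : ℂ))
        = fun k => (RCLike.ofReal ∘ hT.eigenvalues) k * (RCLike.ofReal ∘ hT.eigenvalues) k := by
      funext k
      rw [← Complex.ofReal_mul, abs_mul_abs_self]
      simp [Function.comp, RCLike.ofReal_mul]
    rw [hfun]
  have hS : S = (posSemidef_conjTranspose_mul_self T).1.eigenvectorUnitary.1 *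
      diagonal (((↑) : ℝ → ℂ) ∘ Real.sqrt ∘ (posSemidef_conjTranspose_mul_self T).1.eigenvalues) *
      (star (posSemidef_conjTranspose_mul_self T).1.eigenvectorUnitary : Matrix n n ℂ) := by
    have h1 := CFC.sqrt_sq S hSpsd.nonneg
    rw [hsq, CFC.sqrt_eq_real_sqrt _ (posSemidef_conjTranspose_mul_self T).nonneg,
      cfcₙ_eq_cfc (hf := Real.continuous_sqrt.continuousOn) (hf0 := Real.sqrt_zero),
      (posSemidef_conjTranspose_mul_self T).1.cfc_eq, IsHermitian.cfc,
      Unitary.conjStarAlgAut_apply] at h1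
    exact h1.symm
  have htr : S.trace = ((∑ k, |hT.eigenvalues k| : ℝ) : ℂ) := by
    rw [hSdef, trace_mul_cycle, hU2, one_mul, trace_diagonal]
    push_cast
    rfl
  rw [traceNorm, ← hS, htr, Complex.ofReal_re]

lemma sum_quadform_eq_trace {n : Type*} [Fintype n] [DecidableEq n] {T : Matrix n n ℂ}
    (hT : T.IsHermitian) (P : Matrix n n ℂ) :
    ∑ k, star (⇑(hT.eigenvectorBasis k)) ⬝ᵥ P *ᵥ ⇑(hT.eigenvectorBasis k) = P.trace := by
  set U : Matrix n n ℂ := (hT.eigenvectorUnitary : Matrix n n ℂ)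
  have hU1 : U * star U = 1 := mem_unitaryGroup_iff.mp hT.eigenvectorUnitary.2
  have h1 : ∀ k, star (⇑(hT.eigenvectorBasis k)) ⬝ᵥ P *ᵥ ⇑(hT.eigenvectorBasis k)
      = (star U * P * U) k k := by
    intro k
    simp only [Matrix.mul_apply, Matrix.mulVec, dotProduct, Matrix.star_apply, Pi.star_apply,
      U, hT.eigenvectorUnitary_apply, Finset.sum_mul, Finset.mul_sum]
    rw [Finset.sum_comm]
    refine Finset.sum_congr rfl fun i _ => Finset.sum_congr rfl fun j _ => by ring
  simp only [h1]
  have : ∑ k, (star U * P * U) k k = (star U * P * U).trace := rfl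
  rw [this, trace_mul_cycle, hU1, one_mul]



section pt
variable {d D : ℕ} (X Y : Matrix (Fin d) (Fin d) ℂ)
  (ρ : Matrix (Fin d × Fin D) (Fin d × Fin D) ℂ)

lemma pt_sub : partialTraceS (X - Y) ρ = partialTraceS X ρ - partialTraceS Y ρ := by
  ext a b
  simp [partialTraceS, sub_mul, Finset.sum_sub_distrib]

lemma pt_neg : partialTraceS (-X) ρ = -partialTraceS X ρ := by
  ext a b
  simp [partialTraceS, Finset.sum_neg_distrib]

lemma pt_add : partialTraceS (X + Y) ρ = partialTraceS X ρ + partialTraceS Y ρ := by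
  ext a b
  simp [partialTraceS, add_mul, Finset.sum_add_distrib]

lemma pt_smul (c : ℂ) : partialTraceS (c • X) ρ = c • partialTraceS X ρ := by
  ext a b
  simp [partialTraceS, Finset.mul_sum, mul_assoc]

lemma trace_pt_one : (partialTraceS (1 : Matrix (Fin d) (Fin d) ℂ) ρ).trace = ρ.trace := by
  simp only [partialTraceS, Matrix.trace, Matrix.diag, Matrix.of_apply, Matrix.one_apply]
  rw [Fintype.sum_prod_type]
  rw [Finset.sum_comm]
  refine Finset.sum_congr rfl fun i _ => ?_
  simp [Finset.sum_ite_eq]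

lemma pt_hermitian (hX : X.IsHermitian) (hρ : ρ.IsHermitian) :
    (partialTraceS X ρ).IsHermitian := by
  ext a b
  simp only [conjTranspose_apply, partialTraceS, Matrix.of_apply, star_sum, star_mul']
  rw [Finset.sum_comm]
  refine Finset.sum_congr rfl fun i _ => Finset.sum_congr rfl fun j _ => ?_
  rw [hX.apply, hρ.apply]

lemma pt_posSemidef (hX : X.PosSemidef) (hρ : ρ.PosSemidef) :
    (partialTraceS X ρ).PosSemidef := by
  refine PosSemidef.of_dotProduct_mulVec_nonneg (pt_hermitian X ρ hX.1 hρ.1) fun v => ?_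
  set K : Matrix (Fin d × Fin D) (Fin d × Fin D) ℂ :=
    Matrix.of fun p q => X p.1 q.1 * (v p.2 * star (v q.2)) with hK
  have hKpsd : K.PosSemidef := by
    refine PosSemidef.of_dotProduct_mulVec_nonneg ?_ ?_
    · ext p q
      simp only [conjTranspose_apply, hK, Matrix.of_apply, star_mul', star_star]
      rw [hX.1.apply]
      ring
    · intro w
      have : star w ⬝ᵥ K *ᵥ w
          = star (fun i => ∑ a, w (i, a) * star (v a)) ⬝ᵥ
            X *ᵥ (fun i => ∑ a, w (i, a) * star (v a)) := by
        simp only [dotProduct, Matrix.mulVec, hK, Matrix.of_apply, Pi.star_apply,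
          Fintype.sum_prod_type, Finset.mul_sum, Finset.sum_mul, star_sum, star_mul', star_star]
        conv_rhs => enter [2, i, 2, a]; rw [Finset.sum_comm]
        conv_rhs => enter [2, i]; rw [Finset.sum_comm]
        refine Finset.sum_congr rfl fun i _ => Finset.sum_congr rfl fun j _ =>
          Finset.sum_congr rfl fun a _ => Finset.sum_congr rfl fun b _ => by ring
      rw [this]
      exact hX.dotProduct_mulVec_nonneg _
  have htr : star v ⬝ᵥ (partialTraceS X ρ) *ᵥ v = (K * ρ).trace := by
    simp only [dotProduct, Matrix.mulVec, partialTraceS, Matrix.of_apply, Pi.star_apply,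
      Matrix.trace, Matrix.diag, Matrix.mul_apply, hK, Fintype.sum_prod_type,
      Finset.mul_sum, Finset.sum_mul]
    conv_rhs => enter [2, j, 2, b]; rw [Finset.sum_comm]
    conv_rhs => enter [2, j]; rw [Finset.sum_comm]
    conv_rhs => rw [Finset.sum_comm]
    conv_rhs => enter [2, a]; rw [Finset.sum_comm]
    conv_rhs => enter [2, a, 2, b]; rw [Finset.sum_comm]
    refine Finset.sum_congr rfl fun a _ => Finset.sum_congr rfl fun b _ =>
      Finset.sum_congr rfl fun i _ => Finset.sum_congr rfl fun j _ => by ring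
  rw [htr]
  exact psd_trace_mul_nonneg' hKpsd hρ

lemma trace_pt (hX : X.PosSemidef) (hρ : ρ.PosSemidef) :
    0 ≤ (partialTraceS X ρ).trace :=
  psd_trace_nonneg' (pt_posSemidef X ρ hX hρ)

end pt


/-- For two-outcome POVMs `(M₁, M₂)` and `(N₁, N₂)` on `ℂ^d` and any density matrix `ρ` on
`ℂ^d ⊗ ℂ^D`, the blocks `T_μ = Tr_S[((M_μ − N_μ) ⊗ I) ρ]` satisfy
`‖T₁‖_* + ‖T₂‖_* ≤ 2 · max_k |λ_k(M₁ − N₁)|`. -/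
theorem traceNorm_partialTrace_add_le {d D : ℕ} (hD : 1 ≤ D)
    (M₁ M₂ N₁ N₂ : Matrix (Fin d) (Fin d) ℂ)
    (hM₁ : M₁.PosSemidef) (hM₂ : M₂.PosSemidef) (hMsum : M₁ + M₂ = 1)
    (hN₁ : N₁.PosSemidef) (hN₂ : N₂.PosSemidef) (hNsum : N₁ + N₂ = 1)
    (ρ : Matrix (Fin d × Fin D) (Fin d × Fin D) ℂ)
    (hρ : ρ.PosSemidef) (hρtr : ρ.trace = 1) :
    traceNorm (partialTraceS (M₁ - N₁) ρ) + traceNorm (partialTraceS (M₂ - N₂) ρ) ≤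
      2 * ⨆ k, |(hM₁.1.sub hN₁.1).eigenvalues k| := by
  have hA : (M₁ - N₁).IsHermitian := hM₁.1.sub hN₁.1
  set lam := (hM₁.1.sub hN₁.1).eigenvalues with hlam
  set c := ⨆ k, |lam k| with hc
  have hlamle : ∀ k, |lam k| ≤ c := fun k => by
    rw [hc]
    exact le_ciSup (f := fun k => |lam k|) (Set.Finite.bddAbove (Set.finite_range _)) k
  -- the second block is the negative of the first
  have hMN : M₂ - N₂ = -(M₁ - N₁) := by
    have e1 : M₂ = 1 - M₁ := eq_sub_of_add_eq' hMsum
    have e2 : N₂ = 1 - N₁ := eq_sub_of_add_eq' hNsum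
    rw [e1, e2]
    abel
  rw [hMN, pt_neg, traceNorm_neg']
  suffices h : traceNorm (partialTraceS (M₁ - N₁) ρ) ≤ c by linarith
  -- spectral decomposition of A = M₁ - N₁
  set U : Matrix (Fin d) (Fin d) ℂ := (hA.eigenvectorUnitary : Matrix (Fin d) (Fin d) ℂ) with hU
  have hU1 : U * star U = 1 := mem_unitaryGroup_iff.mp hA.eigenvectorUnitary.2
  set Ap : Matrix (Fin d) (Fin d) ℂ :=
    U * diagonal (fun k => ((max (lam k) 0 : ℝ) : ℂ)) * star U with hAp
  set Am : Matrix (Fin d) (Fin d) ℂ :=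
    U * diagonal (fun k => ((max (-lam k) 0 : ℝ) : ℂ)) * star U with hAm
  have hstar : star U = Uᴴ := rfl
  have hAppsd : Ap.PosSemidef := by
    rw [hAp, hstar]
    exact PosSemidef.mul_mul_conjTranspose_same
      (posSemidef_diagonal_iff.mpr fun k => Complex.zero_le_real.mpr (le_max_right _ _)) U
  have hAmpsd : Am.PosSemidef := by
    rw [hAm, hstar]
    exact PosSemidef.mul_mul_conjTranspose_same
      (posSemidef_diagonal_iff.mpr fun k => Complex.zero_le_real.mpr (le_max_right _ _)) U
  have hsub : Ap - Am = M₁ - N₁ := by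
    rw [hAp, hAm, ← sub_mul, ← mul_sub, diagonal_sub]
    simp only [← Complex.ofReal_sub, max_zero_sub_max_neg_zero_eq_self]
    exact (hA.spectral_theorem).symm
  have hadd : Ap + Am = U * diagonal (fun k => ((|lam k| : ℝ) : ℂ)) * star U := by
    rw [hAp, hAm, ← add_mul, ← mul_add, diagonal_add]
    simp only [← Complex.ofReal_add, max_zero_add_max_neg_zero_eq_abs_self]
  -- c • 1 - (Ap + Am) is PSD
  have hBpsd : (((c : ℂ) • (1 : Matrix (Fin d) (Fin d) ℂ)) - (Ap + Am)).PosSemidef := by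
    have hone : ((c : ℂ) • (1 : Matrix (Fin d) (Fin d) ℂ))
        = U * diagonal (fun _ => (c : ℂ)) * star U := by
      have : U * diagonal (fun _ : Fin d => (c : ℂ)) * star U
          = (c : ℂ) • (1 : Matrix (Fin d) (Fin d) ℂ) := by
        rw [← smul_one_eq_diagonal, mul_smul_comm, smul_mul_assoc, mul_one, hU1]
      exact this.symm
    rw [hone, hadd, ← sub_mul, ← mul_sub, diagonal_sub, hstar]
    refine PosSemidef.mul_mul_conjTranspose_same (posSemidef_diagonal_iff.mpr fun k => ?_) U
    simp only [Pi.sub_apply, ← Complex.ofReal_sub]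
    exact Complex.zero_le_real.mpr (sub_nonneg.mpr (hlamle k))
  -- the three partial traces
  set T := partialTraceS (M₁ - N₁) ρ with hTdef
  have hT : T.IsHermitian := pt_hermitian _ _ hA hρ.1
  have hTp : (partialTraceS Ap ρ).PosSemidef := pt_posSemidef _ _ hAppsd hρ
  have hTm : (partialTraceS Am ρ).PosSemidef := pt_posSemidef _ _ hAmpsd hρ
  have hTsplit : T = partialTraceS Ap ρ - partialTraceS Am ρ := by
    rw [hTdef, ← hsub, pt_sub]
  -- bound each eigenvalue of T
  have hkey : ∀ k, |hT.eigenvalues k| ≤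
      (star (⇑(hT.eigenvectorBasis k)) ⬝ᵥ (partialTraceS Ap ρ) *ᵥ ⇑(hT.eigenvectorBasis k)).re
      + (star (⇑(hT.eigenvectorBasis k)) ⬝ᵥ (partialTraceS Am ρ) *ᵥ ⇑(hT.eigenvectorBasis k)).re := by
    intro k
    obtain ⟨u, hu⟩ : ∃ u, u = ⇑(hT.eigenvectorBasis k) := ⟨_, rfl⟩
    have heq := hT.eigenvalues_eq k
    rw [← hu] at heq
    rw [← hu, heq, RCLike.re_to_complex, hTsplit, sub_mulVec, dotProduct_sub, Complex.sub_re]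
    refine (abs_sub _ _).trans ?_
    rw [abs_of_nonneg, abs_of_nonneg]
    · simpa [RCLike.re_to_complex] using hTm.re_dotProduct_nonneg u
    · simpa [RCLike.re_to_complex] using hTp.re_dotProduct_nonneg u
  -- sum up
  have hsum : traceNorm T ≤ ((partialTraceS Ap ρ).trace).re + ((partialTraceS Am ρ).trace).re := by
    rw [traceNorm_hermitian hT]
    calc ∑ k, |hT.eigenvalues k| ≤
        ∑ k, ((star (⇑(hT.eigenvectorBasis k)) ⬝ᵥ (partialTraceS Ap ρ) *ᵥ ⇑(hT.eigenvectorBasis k)).re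
        + (star (⇑(hT.eigenvectorBasis k)) ⬝ᵥ (partialTraceS Am ρ) *ᵥ ⇑(hT.eigenvectorBasis k)).re) :=
          Finset.sum_le_sum fun k _ => hkey k
      _ = ((partialTraceS Ap ρ).trace).re + ((partialTraceS Am ρ).trace).re := by
          rw [Finset.sum_add_distrib, ← Complex.re_sum, ← Complex.re_sum,
            sum_quadform_eq_trace hT, sum_quadform_eq_trace hT]
  -- bound the sum of traces by c
  have hfinal : ((partialTraceS Ap ρ).trace).re + ((partialTraceS Am ρ).trace).re ≤ c := by
    have h0 : 0 ≤ (partialTraceS (((c : ℂ) • (1 : Matrix (Fin d) (Fin d) ℂ)) - (Ap + Am)) ρ).trace :=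
      trace_pt _ _ hBpsd hρ
    have hsplit : (partialTraceS (((c : ℂ) • (1 : Matrix (Fin d) (Fin d) ℂ)) - (Ap + Am)) ρ).trace
        = (c : ℂ) - ((partialTraceS Ap ρ).trace + (partialTraceS Am ρ).trace) := by
      rw [pt_sub, pt_smul, pt_add, trace_sub, trace_smul, trace_pt_one, hρtr, trace_add]
      simp
    rw [hsplit] at h0
    have := (Complex.le_def.mp h0).1
    simp only [Complex.zero_re, Complex.sub_re, Complex.add_re, Complex.ofReal_re] at this
    linarith
  exact hsum.trans hfinal
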